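/- Let p be a nonzero polynomial in n complex variables whose variety V(p) ⊆ ℂⁿ is allowable. Then p factors as p = c·∏_j p_j for some nonzero constant c ∈ ℂ, where each factor p_j is a power of a coordinate x_i, a power of a difference x_i − x_j, or a power of a sum x_i + x_j. -/

import Mathlib

open MvPolynomial

/-- An allowable hyperplane in `Kⁿ` is one of `{x : x i = 0}`, `{x : x i + x j = 0}`,
`{x : x i - x j = 0}`. -/
def IsAllowableHyperplane {K : Type*} [Ring K] {n : ℕ} (H : Set (Fin n → K)) : Prop :=
  (∃ i : Fin n, H = {x | x i = 0}) ∨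
  (∃ i j : Fin n, H = {x | x i + x j = 0}) ∨
  (∃ i j : Fin n, H = {x | x i - x j = 0})

/-- A set is allowable if it is a finite union of finite (nonempty) intersections of
allowable hyperplanes. -/
def IsAllowable {K : Type*} [Ring K] {n : ℕ} (A : Set (Fin n → K)) : Prop :=
  ∃ 𝒢 : Finset (Finset (Set (Fin n → K))),
    (∀ G ∈ 𝒢, G.Nonempty ∧ ∀ H ∈ G, IsAllowableHyperplane H) ∧
    A = ⋃ G ∈ 𝒢, ⋂₀ (G : Set (Set (Fin n → K)))

/-- The shape of allowed linear factors. -/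
def PolyShape {n : ℕ} (ℓ : MvPolynomial (Fin n) ℂ) : Prop :=
  (∃ i, ℓ = X i) ∨ (∃ i j, ℓ = X i - X j) ∨ (∃ i j, ℓ = X i + X j)

lemma coeff_aeval_elim {n : ℕ} (i : Fin n) (m : Fin n →₀ ℕ) (hm : m i = 0)
    (q : MvPolynomial (Fin n) ℂ) :
    coeff m (aeval (fun k => if k = i then 0 else X k) q) = coeff m q := by
  classical
  induction q using MvPolynomial.induction_on' with
  | monomial u a =>
    rw [aeval_monomial]
    by_cases hu : u i = 0
    · have hprod : (u.prod fun k e => (if k = i then (0 : MvPolynomial (Fin n) ℂ) else X k) ^ e)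
          = u.prod fun k e => (X k) ^ e := by
        apply Finsupp.prod_congr
        intro k hk
        have hki : k ≠ i := fun h => (Finsupp.mem_support_iff.mp hk) (h ▸ hu)
        rw [if_neg hki]
      rw [hprod, algebraMap_eq, ← monomial_eq]
    · have hzero : (u.prod fun k e =>
          (if k = i then (0 : MvPolynomial (Fin n) ℂ) else X k) ^ e) = 0 := by
        rw [Finsupp.prod]
        apply Finset.prod_eq_zero (Finsupp.mem_support_iff.mpr hu)
        rw [if_pos rfl, zero_pow hu]
      have hum : u ≠ m := fun h => hu (h ▸ hm)
      rw [hzero, mul_zero, coeff_zero, coeff_monomial, if_neg hum]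
  | add p q hp hq => simp only [map_add, coeff_add, hp, hq]

lemma X_dvd_iff_aeval {n : ℕ} (i : Fin n) (q : MvPolynomial (Fin n) ℂ) :
    X i ∣ q ↔ aeval (fun k => if k = i then (0 : MvPolynomial (Fin n) ℂ) else X k) q = 0 := by
  constructor
  · rintro ⟨t, rfl⟩
    rw [map_mul, aeval_X, if_pos rfl, zero_mul]
  · intro h
    rw [← support_sum_monomial_coeff q]
    apply Finset.dvd_sum
    intro m hm
    rw [X_dvd_monomial]
    right
    intro h0
    have hc := coeff_aeval_elim i m h0 q
    rw [h, coeff_zero] at hc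
    exact (mem_support_iff.mp hm) hc.symm

lemma prime_X_cplx {n : ℕ} (i : Fin n) : Prime (X i : MvPolynomial (Fin n) ℂ) := by
  refine ⟨X_ne_zero i, ?_, ?_⟩
  · intro h
    have h1 : (X i : MvPolynomial (Fin n) ℂ) ∣ 1 := h.dvd
    rw [X_dvd_iff_aeval, map_one] at h1
    exact one_ne_zero h1
  · intro a b hab
    rw [X_dvd_iff_aeval] at hab
    rcases mul_eq_zero.mp (by rwa [map_mul] at hab) with h | h
    · exact Or.inl ((X_dvd_iff_aeval i a).mpr h)
    · exact Or.inr ((X_dvd_iff_aeval i b).mpr h)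

lemma prime_shear {n : ℕ} {i j : Fin n} (hij : i ≠ j) (a : ℂ) :
    Prime (X i + C a * X j : MvPolynomial (Fin n) ℂ) := by
  classical
  let F : ℂ → (MvPolynomial (Fin n) ℂ →ₐ[ℂ] MvPolynomial (Fin n) ℂ) :=
    fun b => aeval (fun k => if k = i then X i + C b * X j else X k)
  have key : ∀ b : ℂ, (F b).comp (F (-b)) = AlgHom.id ℂ _ := by
    intro b
    apply MvPolynomial.algHom_ext
    intro k
    simp only [AlgHom.coe_comp, Function.comp_apply, AlgHom.id_apply, F, aeval_X]
    by_cases hk : k = i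
    · subst hk
      rw [if_pos rfl, map_add, map_mul, aeval_X, aeval_X, if_pos rfl, if_neg hij.symm, aeval_C]
      rw [algebraMap_eq, map_neg]
      ring
    · rw [if_neg hk, aeval_X, if_neg hk]
  have key2 : (F (-a)).comp (F a) = AlgHom.id ℂ _ := by
    have h := key (-a); rwa [neg_neg] at h
  let e : MvPolynomial (Fin n) ℂ ≃ₐ[ℂ] MvPolynomial (Fin n) ℂ :=
    AlgEquiv.ofAlgHom (F a) (F (-a)) (key a) key2
  have he : e (X i) = X i + C a * X j := by
    show F a (X i) = _
    simp [F]
  rw [← he]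
  exact (MulEquiv.prime_iff e.toRingEquiv.toMulEquiv).mpr (prime_X_cplx i)

lemma prime_sum {n : ℕ} (i j : Fin n) : Prime (X i + X j : MvPolynomial (Fin n) ℂ) := by
  by_cases hij : i = j
  · subst hij
    have h2 : IsUnit (C (2 : ℂ) : MvPolynomial (Fin n) ℂ) :=
      (isUnit_iff_ne_zero.mpr (two_ne_zero)).map (C : ℂ →+* MvPolynomial (Fin n) ℂ)
    obtain ⟨u, hu⟩ := h2
    have hassoc : Associated (X i : MvPolynomial (Fin n) ℂ) (X i + X i) :=
      ⟨u, by rw [hu, map_ofNat]; ring⟩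
    exact hassoc.prime (prime_X_cplx i)
  · have h := prime_shear hij 1
    rwa [map_one, one_mul] at h

lemma prime_diff {n : ℕ} {i j : Fin n} (hij : i ≠ j) :
    Prime (X i - X j : MvPolynomial (Fin n) ℂ) := by
  have h := prime_shear hij (-1)
  rw [map_neg, map_one, neg_one_mul, ← sub_eq_add_neg] at h
  exact h

lemma unit_eq_C : ∀ {n : ℕ} (u : MvPolynomial (Fin n) ℂ), IsUnit u → ∃ c : ℂ, c ≠ 0 ∧ u = C c := by
  intro n
  induction n with
  | zero =>
    intro u hu
    obtain ⟨c, rfl⟩ := C_surjective (Fin 0) u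
    refine ⟨c, ?_, rfl⟩
    rintro rfl
    rw [map_zero] at hu
    exact not_isUnit_zero hu
  | succ n ih =>
    intro u hu
    have hv : IsUnit (finSuccEquiv ℂ n u) := hu.map _
    obtain ⟨r, hr, hCr⟩ := Polynomial.isUnit_iff.mp hv
    obtain ⟨c, hc, rfl⟩ := ih r hr
    refine ⟨c, hc, ?_⟩
    have h1 := congrArg (finSuccEquiv ℂ n).symm hCr
    rw [AlgEquiv.symm_apply_apply] at h1
    rw [← h1]
    exact RingHom.congr_fun (finSuccEquiv_comp_C_eq_C n) c

lemma factor_step {n : ℕ} {α : Type} (s : Finset α) (g : α → MvPolynomial (Fin n) ℂ)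
    (hg : ∀ t ∈ s, Prime (g t) ∧ PolyShape (g t)) (m : ℕ) (p : MvPolynomial (Fin n) ℂ)
    (hp0 : p ≠ 0) (hdvd : p ∣ (∏ t ∈ s, g t) ^ m) :
    ∃ (c : ℂ) (M : Multiset (MvPolynomial (Fin n) ℂ)),
      c ≠ 0 ∧ (∀ ℓ ∈ M, PolyShape ℓ) ∧ p = C c * M.prod := by
  classical
  revert hp0 hdvd
  induction p using WfDvdMonoid.induction_on_irreducible with
  | zero => intro h _; exact absurd rfl h
  | unit u hu =>
    intro _ _
    obtain ⟨c, hc, rfl⟩ := unit_eq_C u hu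
    exact ⟨c, 0, hc, by simp, by simp⟩
  | mul a i ha hirr ih =>
    intro hne hdvd
    have hiprime : Prime i := UniqueFactorizationMonoid.irreducible_iff_prime.mp hirr
    have hidvd : i ∣ (∏ t ∈ s, g t) :=
      hiprime.dvd_of_dvd_pow (dvd_trans (dvd_mul_right i a) hdvd)
    obtain ⟨t, hts, hit⟩ := hiprime.exists_mem_finset_dvd hidvd
    have hgt := hg t hts
    obtain ⟨u, hu⟩ := hirr.associated_of_dvd hgt.1.irreducible hit
    obtain ⟨d, hd, hCd⟩ := unit_eq_C (u : MvPolynomial (Fin n) ℂ) u.isUnit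
    obtain ⟨c, M, hc, hM, ha'⟩ := ih ha (dvd_trans (dvd_mul_left a i) hdvd)
    refine ⟨c * d⁻¹, g t ::ₘ M, mul_ne_zero hc (inv_ne_zero hd), ?_, ?_⟩
    · intro ℓ hℓ
      rcases Multiset.mem_cons.mp hℓ with h | h
      · exact h ▸ hgt.2
      · exact hM ℓ h
    · rw [Multiset.prod_cons]
      have hiCd : i * C d = g t := by rw [← hCd]; exact hu
      have hieq : i = C d⁻¹ * g t := by
        calc i = C d⁻¹ * C d * i := by
              rw [← map_mul, inv_mul_cancel₀ hd, map_one, one_mul]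
          _ = C d⁻¹ * (i * C d) := by ring
          _ = C d⁻¹ * g t := by rw [hiCd]
      rw [hieq, ha', map_mul]
      ring

/-- A nonzero complex polynomial whose variety is allowable factors as a nonzero constant
times a product of powers of coordinates `x i`, differences `x i - x j`, and sums
`x i + x j`. -/
theorem stmt4 {n : ℕ} (p : MvPolynomial (Fin n) ℂ) (hp : p ≠ 0)
    (hall : IsAllowable {x : Fin n → ℂ | MvPolynomial.eval x p = 0}) :
    ∃ (c : ℂ) (m : ℕ) (f : Fin m → MvPolynomial (Fin n) ℂ) (e : Fin m → ℕ),
      c ≠ 0 ∧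
      (∀ l : Fin m, 1 ≤ e l ∧
        ((∃ i, f l = MvPolynomial.X i) ∨
         (∃ i j, f l = MvPolynomial.X i - MvPolynomial.X j) ∨
         (∃ i j, f l = MvPolynomial.X i + MvPolynomial.X j))) ∧
      p = MvPolynomial.C c * ∏ l : Fin m, (f l) ^ (e l) := by
  classical
  obtain ⟨𝒢, h𝒢, hV⟩ := hall
  have hnz : ∀ G ∈ 𝒢, ∃ ℓ : MvPolynomial (Fin n) ℂ, Prime ℓ ∧ PolyShape ℓ ∧
      ∀ x ∈ ⋂₀ (G : Set (Set (Fin n → ℂ))), MvPolynomial.eval x ℓ = 0 := by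
    intro G hG
    by_cases hgood : ∃ H ∈ G, (∃ i : Fin n, H = {x | x i = 0}) ∨
        (∃ i j : Fin n, H = {x | x i + x j = 0}) ∨
        (∃ i j : Fin n, i ≠ j ∧ H = {x | x i - x j = 0})
    · obtain ⟨H, hHG, hcase⟩ := hgood
      have hsub : ⋂₀ (G : Set (Set (Fin n → ℂ))) ⊆ H :=
        Set.sInter_subset_of_mem (by exact_mod_cast hHG)
      rcases hcase with ⟨i, rfl⟩ | ⟨i, j, rfl⟩ | ⟨i, j, hij, rfl⟩
      · exact ⟨X i, prime_X_cplx i, Or.inl ⟨i, rfl⟩, fun x hx => by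
          have hxx := hsub hx; simpa using hxx⟩
      · exact ⟨X i + X j, prime_sum i j, Or.inr (Or.inr ⟨i, j, rfl⟩), fun x hx => by
          have hxx := hsub hx; simpa using hxx⟩
      · exact ⟨X i - X j, prime_diff hij, Or.inr (Or.inl ⟨i, j, rfl⟩), fun x hx => by
          have hxx := hsub hx; simpa using hxx⟩
    · exfalso
      have huniv : ∀ H ∈ G, H = (Set.univ : Set (Fin n → ℂ)) := by
        intro H hH
        rcases (h𝒢 G hG).2 H hH with ⟨i, rfl⟩ | ⟨i, j, rfl⟩ | ⟨i, j, rfl⟩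
        · exact absurd ⟨_, hH, Or.inl ⟨i, rfl⟩⟩ hgood
        · exact absurd ⟨_, hH, Or.inr (Or.inl ⟨i, j, rfl⟩)⟩ hgood
        · by_cases hij : i = j
          · subst hij; ext x; simp
          · exact absurd ⟨_, hH, Or.inr (Or.inr ⟨i, j, hij, rfl⟩)⟩ hgood
      have hIG : ⋂₀ (G : Set (Set (Fin n → ℂ))) = Set.univ :=
        Set.sInter_eq_univ.mpr (fun s hs => huniv s (by exact_mod_cast hs))
      have hall0 : ∀ x : Fin n → ℂ, MvPolynomial.eval x p = 0 := by
        intro x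
        have hx : x ∈ ⋃ G' ∈ 𝒢, ⋂₀ (G' : Set (Set (Fin n → ℂ))) :=
          Set.mem_biUnion hG (hIG ▸ Set.mem_univ x)
        rw [← hV] at hx
        exact hx
      exact hp (MvPolynomial.funext (fun x => by rw [hall0 x, map_zero]))
  choose ℓfun hP hS hZ using hnz
  set q : MvPolynomial (Fin n) ℂ := ∏ G ∈ 𝒢.attach, ℓfun G.1 G.2 with hqdef
  have hvan : ∀ x : Fin n → ℂ, MvPolynomial.eval x p = 0 → MvPolynomial.eval x q = 0 := by
    intro x hx
    have hx' : x ∈ {x : Fin n → ℂ | MvPolynomial.eval x p = 0} := hx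
    rw [hV] at hx'
    simp only [Set.mem_iUnion] at hx'
    obtain ⟨G, hG, hxG⟩ := hx'
    rw [hqdef, map_prod]
    exact Finset.prod_eq_zero (Finset.mem_attach _ ⟨G, hG⟩) (hZ G hG x hxG)
  have hq_mem : q ∈ MvPolynomial.vanishingIdeal ℂ
      (MvPolynomial.zeroLocus ℂ (Ideal.span {p})) := by
    rw [MvPolynomial.mem_vanishingIdeal_iff]
    intro x hx
    exact hvan x ((MvPolynomial.mem_zeroLocus_iff.mp hx) p
      (Ideal.subset_span (Set.mem_singleton p)))
  rw [MvPolynomial.vanishingIdeal_zeroLocus_eq_radical] at hq_mem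
  obtain ⟨m, hm⟩ := hq_mem
  rw [Ideal.mem_span_singleton] at hm
  obtain ⟨c, M, hc, hM, hfac⟩ := factor_step 𝒢.attach (fun G => ℓfun G.1 G.2)
    (fun G _ => ⟨hP G.1 G.2, hS G.1 G.2⟩) m p hp hm
  refine ⟨c, M.toList.length, fun l => M.toList.get l, fun _ => 1, hc, ?_, ?_⟩
  · intro l
    refine ⟨le_refl 1, ?_⟩
    have hmem : M.toList.get l ∈ M := by
      rw [← Multiset.mem_toList]; exact List.get_mem _ _
    exact hM _ hmem
  · simp only [pow_one]
    rw [hfac]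
    congr 1
    rw [← Multiset.prod_toList]
    conv_lhs => rw [← List.ofFn_get M.toList]
    rw [List.prod_ofFn]
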